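/- Let Λ ⊆ ℝ be a locally finite point set that is reflection symmetric in two distinct points. Then Λ is uniformly discrete, i.e., there exists r > 0 such that any two distinct points of Λ are at distance at least r. -/

import Mathlib

/-- A locally finite subset of `ℝ` that is reflection symmetric in two distinct
points is uniformly discrete. -/
theorem locallyFinite_two_reflection_centres_uniformly_discrete
    (Λ : Set ℝ)
    (hlf : ∀ K : Set ℝ, IsCompact K → (Λ ∩ K).Finite)
    (x y : ℝ) (hxy : x ≠ y)
    (hx : (fun w => 2 * x - w) '' Λ = Λ)
    (hy : (fun w => 2 * y - w) '' Λ = Λ) :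
    ∃ r > 0, ∀ p ∈ Λ, ∀ q ∈ Λ, p ≠ q → r ≤ |p - q| := by
  have hx' : ∀ w ∈ Λ, 2 * x - w ∈ Λ := fun w hw => hx ▸ ⟨w, hw, rfl⟩
  have hy' : ∀ w ∈ Λ, 2 * y - w ∈ Λ := fun w hw => hy ▸ ⟨w, hw, rfl⟩
  set t : ℝ := 2 * y - 2 * x with ht
  have htne : t ≠ 0 := by
    simp only [ht]
    intro h
    exact hxy (by linarith [sub_eq_zero.mp h])
  have htpos : 0 < |t| := abs_pos.mpr htne
  have hplus : ∀ w ∈ Λ, w + t ∈ Λ := by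
    intro w hw
    have h1 := hy' _ (hx' w hw)
    have e : w + t = 2 * y - (2 * x - w) := by rw [ht]; ring
    rw [e]; exact h1
  have hminus : ∀ w ∈ Λ, w - t ∈ Λ := by
    intro w hw
    have h1 := hx' _ (hy' w hw)
    have e : w - t = 2 * x - (2 * y - w) := by rw [ht]; ring
    rw [e]; exact h1
  have hZ : ∀ n : ℤ, ∀ w ∈ Λ, w + (n : ℝ) * t ∈ Λ := by
    intro n
    induction n using Int.induction_on with
    | zero => intro w hw; simpa using hw
    | succ k ih =>
        intro w hw
        have h1 := hplus _ (ih w hw)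
        have e : w + ((k : ℤ) + 1 : ℤ) * t = (w + (k : ℤ) * t) + t := by
          push_cast; ring
        rw [e]; exact h1
    | pred k ih =>
        intro w hw
        have h1 := hminus _ (ih w hw)
        push_cast at h1 ⊢
        have e : w + (-(k : ℝ) - 1) * t = (w + (-(k : ℝ)) * t) - t := by ring
        rw [e]; exact h1
  have hK : IsCompact (Set.Icc (-(|t| + 1)) (|t| + 1)) := isCompact_Icc
  have hF : (Λ ∩ Set.Icc (-(|t| + 1)) (|t| + 1)).Finite := hlf _ hK
  set F : Finset ℝ := hF.toFinset with hFdef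
  set P : Finset ℝ :=
    ((F ×ˢ F).filter (fun p => p.1 ≠ p.2)).image (fun p => |p.1 - p.2|) with hPdef
  have hPpos : ∀ d ∈ P, 0 < d := by
    intro d hd
    simp only [hPdef, Finset.mem_image, Finset.mem_filter] at hd
    obtain ⟨⟨a, b⟩, ⟨_, hab⟩, rfl⟩ := hd
    exact abs_pos.mpr (sub_ne_zero.mpr hab)
  refine ⟨min 1 (if h : P.Nonempty then P.min' h else 1), ?_, ?_⟩
  · rcases em P.Nonempty with h | h
    · rw [dif_pos h]
      exact lt_min one_pos (hPpos _ (P.min'_mem h))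
    · rw [dif_neg h]; simp
  · intro p hp q hq hpq
    rcases le_or_gt 1 |p - q| with h1 | h1
    · exact le_trans (min_le_left _ _) h1
    · -- translate the pair into the compact window
      set n : ℤ := round (p / t) with hn
      have hp' : p + (-n : ℤ) * t ∈ Λ := hZ (-n) p hp
      have hq' : q + (-n : ℤ) * t ∈ Λ := hZ (-n) q hq
      have hpbound : |p + (-n : ℤ) * t| ≤ |t| := by
        have e : p + (-n : ℤ) * t = t * (p / t - n) := by
          field_simp
          push_cast; ring
        rw [e, abs_mul]
        calc |t| * |p / t - n| ≤ |t| * (1 / 2) := by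
              apply mul_le_mul_of_nonneg_left _ (abs_nonneg t)
              simpa [hn] using abs_sub_round (p / t)
          _ ≤ |t| := by nlinarith
      have hqbound : |q + (-n : ℤ) * t| ≤ |t| + 1 := by
        have e : q + (-n : ℤ) * t = (p + (-n : ℤ) * t) + (q - p) := by ring
        rw [e]
        calc |(p + (-n : ℤ) * t) + (q - p)| ≤ |p + (-n : ℤ) * t| + |q - p| :=
              abs_add_le _ _
          _ ≤ |t| + 1 := by
              have : |q - p| ≤ 1 := by rw [abs_sub_comm]; linarith
              linarith
      have hpF : p + (-n : ℤ) * t ∈ F := by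
        rw [hFdef, Set.Finite.mem_toFinset]
        exact ⟨hp', by rw [Set.mem_Icc]; constructor <;> [linarith [abs_le.mp (le_trans hpbound (by linarith : |t| ≤ |t| + 1))]; linarith [abs_le.mp (le_trans hpbound (by linarith : |t| ≤ |t| + 1))]]⟩
      have hqF : q + (-n : ℤ) * t ∈ F := by
        rw [hFdef, Set.Finite.mem_toFinset]
        exact ⟨hq', by rw [Set.mem_Icc]; constructor <;> [linarith [abs_le.mp hqbound]; linarith [abs_le.mp hqbound]]⟩
      have hne : p + (-n : ℤ) * t ≠ q + (-n : ℤ) * t := by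
        intro h; exact hpq (by linarith [add_right_cancel h])
      have hmem : |p - q| ∈ P := by
        simp only [hPdef, Finset.mem_image, Finset.mem_filter, Finset.mem_product]
        exact ⟨(p + (-n : ℤ) * t, q + (-n : ℤ) * t), ⟨⟨hpF, hqF⟩, hne⟩,
          by ring_nf⟩
      have hne' : P.Nonempty := ⟨_, hmem⟩
      calc min 1 (if h : P.Nonempty then P.min' h else 1)
          ≤ (if h : P.Nonempty then P.min' h else 1) := min_le_right _ _
        _ = P.min' hne' := dif_pos hne'
        _ ≤ |p - q| := P.min'_le _ hmem
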